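/- For the element t = e_{-1}⊗e_1 - q² e_1⊗e_{-1} + (q - q^{-1}) Σ_{i=2}^{n+m} ((C^q)^{-1})_{i,-i} e_i⊗e_{-i}, the value of the linear form b̃^q is b̃^q(t) = -q^{-1}(q^{2d+2} + 1), where d = n - m. In particular b̃^q(t) ≠ 0 when q is not a root of unity. -/

import Mathlib

private lemma geom9 {K : Type*} [Field K] (q : K) (hq0 : q ≠ 0) (a : ℤ) :
    ∀ b : ℤ, a ≤ b →
      (q ^ (2:ℤ) - 1) * ∑ i ∈ Finset.Ioc a b, q ^ (2*i)
        = q ^ (2*b+2) - q ^ (2*a+2) := by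
  refine Int.le_induction ?_ ?_
  · simp
  · intro b hb ih
    have hins : Finset.Ioc a (b+1) = insert (b+1) (Finset.Ioc a b) := by
      ext x; simp only [Finset.mem_Ioc, Finset.mem_insert]; omega
    have hnm : (b+1) ∉ Finset.Ioc a b := by simp
    have e1 : q ^ (2*(b+1)) = q ^ (2*b) * q ^ (2:ℤ) := by
      rw [show (2*(b+1):ℤ) = 2*b+2 from by ring, zpow_add₀ hq0]
    have e2 : q ^ (2*(b+1)+2) = q ^ (2*b) * q ^ (2:ℤ) * q ^ (2:ℤ) := by
      rw [show (2*(b+1)+2:ℤ) = 2*b+2+2 from by ring, zpow_add₀ hq0, zpow_add₀ hq0]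
    have e3 : q ^ (2*b+2) = q ^ (2*b) * q ^ (2:ℤ) := by rw [zpow_add₀ hq0]
    rw [hins, Finset.sum_insert hnm, mul_add, ih, e1, e2, e3]
    ring




/-- For t = e_{-1}⊗e_1 - q² e_1⊗e_{-1}
+ (q - q^{-1}) Σ_{i=2}^{n+m} ((C^q)^{-1})_{i,-i} e_i⊗e_{-i}, the linear form
b̃^q (with b̃^q(e_i⊗e_k) = C^q_{i,-i} δ_{i,-k}) takes the value
b̃^q(t) = -q^{-1}(q^{2d+2} + 1), d = n-m; in particular b̃^q(t) ≠ 0 when q is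
not a root of unity.  Since ((C^q)^{-1})_{i,-i} = (C^q_{-i,i})⁻¹, the value
b̃^q(t) is C^q_{-1,1} - q² C^q_{1,-1} + (q-q^{-1}) Σ_{i=2}^{r} (C^q_{-i,i})⁻¹ C^q_{i,-i}. -/
theorem stmt9 (K : Type*) [Field K] [CharZero K]
    (m n r d : ℤ) (hm : 1 ≤ m) (hn : 1 ≤ n) (hr : r = m + n) (hd : d = n - m)
    (q : K) (hq0 : q ≠ 0) (hqru : ∀ k : ℕ, k ≠ 0 → q ^ k ≠ 1)
    (cq : ℤ → K)
    (hcq : ∀ i : ℤ,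
      cq i = if 1 ≤ i ∧ i ≤ n then q ^ i
        else if n + 1 ≤ i ∧ i ≤ r then q ^ (2 * n - i)
        else if -n ≤ i ∧ i ≤ -1 then -(q ^ i)
        else q ^ (-i - 2 * n - 2)) :
    cq (-1) - q ^ (2 : ℤ) * cq 1
        + (q - q⁻¹) * ∑ i ∈ Finset.Icc (2 : ℤ) r, (cq (-i))⁻¹ * cq i
      = -q⁻¹ * (q ^ (2 * d + 2) + 1) ∧
    cq (-1) - q ^ (2 : ℤ) * cq 1
        + (q - q⁻¹) * ∑ i ∈ Finset.Icc (2 : ℤ) r, (cq (-i))⁻¹ * cq i ≠ 0 := by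
  set S := ∑ i ∈ Finset.Icc (2 : ℤ) r, (cq (-i))⁻¹ * cq i with hSdef
  have hIcc : Finset.Icc (2:ℤ) r = Finset.Ioc 1 r := by
    ext x; simp only [Finset.mem_Icc, Finset.mem_Ioc]; omega
  have hterm1 : ∀ i ∈ Finset.Ioc (1:ℤ) n, (cq (-i))⁻¹ * cq i = -(q ^ (2*i)) := by
    intro i hi
    rw [Finset.mem_Ioc] at hi
    rw [hcq i, hcq (-i),
      if_neg (show ¬(1 ≤ -i ∧ -i ≤ n) by omega),
      if_neg (show ¬(n + 1 ≤ -i ∧ -i ≤ r) by omega),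
      if_pos (show -n ≤ -i ∧ -i ≤ -1 from ⟨by omega, by omega⟩),
      if_pos (show 1 ≤ i ∧ i ≤ n from ⟨by omega, hi.2⟩),
      zpow_neg, inv_neg, inv_inv,
      show (2*i:ℤ) = i + i from by ring, zpow_add₀ hq0]
    ring
  have hterm2 : ∀ i ∈ Finset.Ioc n r, (cq (-i))⁻¹ * cq i = q ^ (2*(2*n+1-i)) := by
    intro i hi
    rw [Finset.mem_Ioc] at hi
    rw [hcq i, hcq (-i),
      if_neg (show ¬(1 ≤ -i ∧ -i ≤ n) by omega),
      if_neg (show ¬(n + 1 ≤ -i ∧ -i ≤ r) by omega),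
      if_neg (show ¬(-n ≤ -i ∧ -i ≤ -1) by omega),
      if_neg (show ¬(1 ≤ i ∧ i ≤ n) by omega),
      if_pos (show n + 1 ≤ i ∧ i ≤ r from ⟨by omega, hi.2⟩),
      ← zpow_neg, ← zpow_add₀ hq0]
    congr 1
    ring
  have hre : ∑ i ∈ Finset.Ioc n r, q ^ (2*(2*n+1-i)) = ∑ j ∈ Finset.Ioc d n, q ^ (2*j) := by
    refine Finset.sum_nbij' (fun i => 2*n+1-i) (fun j => 2*n+1-j) ?_ ?_ ?_ ?_ ?_ <;>
        intro a ha <;> simp only [Finset.mem_Ioc] at * <;>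
      first
        | omega
        | rfl
  have hsplit : (∑ i ∈ Finset.Ioc (1:ℤ) n, (cq (-i))⁻¹ * cq i)
      + (∑ i ∈ Finset.Ioc n r, (cq (-i))⁻¹ * cq i) = S := by
    have hun : Finset.Ioc (1:ℤ) r = Finset.Ioc 1 n ∪ Finset.Ioc n r := by
      ext x; simp only [Finset.mem_Ioc, Finset.mem_union]; omega
    have hdisj : Disjoint (Finset.Ioc (1:ℤ) n) (Finset.Ioc n r) := by
      rw [Finset.disjoint_left]
      intro x hx hx'
      rw [Finset.mem_Ioc] at hx hx'
      omega
    rw [hSdef, hIcc, hun, Finset.sum_union hdisj]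
  have hkey : (q ^ (2:ℤ) - 1) * S = q ^ (4:ℤ) - q ^ (2*d+2) := by
    rw [← hsplit, Finset.sum_congr rfl hterm1, Finset.sum_congr rfl hterm2, hre, mul_add,
      Finset.sum_neg_distrib, mul_neg, geom9 q hq0 1 n hn, geom9 q hq0 d n (by omega),
      show (2*1+2:ℤ) = 4 from by norm_num]
    ring
  have e2 : q ^ (2:ℤ) = q * q := by
    rw [show (2:ℤ) = 1+1 from rfl, zpow_add₀ hq0, zpow_one]
  have e4 : q ^ (4:ℤ) = q*q*(q*q) := by
    rw [show (4:ℤ) = 2+2 from rfl, zpow_add₀ hq0, e2]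
  have h2 : q*q - 1 ≠ 0 := by
    have := hqru 2 two_ne_zero
    rw [pow_two] at this
    exact sub_ne_zero.mpr this
  have hcqm1 : cq (-1) = -(q ^ (-1:ℤ)) := by
    rw [hcq, if_neg (by omega), if_neg (by omega), if_pos ⟨by omega, le_refl _⟩]
  have hcq1 : cq 1 = q ^ (1:ℤ) := by
    rw [hcq, if_pos ⟨le_refl _, hn⟩]
  set A := q ^ (2*d+2) with hA
  have hSval : S = (q*q*(q*q) - A) / (q*q - 1) := by
    rw [eq_div_iff h2]
    rw [e2, e4] at hkey
    linear_combination hkey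
  have hmain : cq (-1) - q ^ (2:ℤ) * cq 1 + (q - q⁻¹) * S = -q⁻¹ * (A + 1) := by
    rw [hcqm1, hcq1, hSval, e2, zpow_one, zpow_neg_one]
    have h2' : q ^ 2 - 1 ≠ 0 := by rw [pow_two]; exact h2
    field_simp
    ring
  refine ⟨hmain, ?_⟩
  rw [hmain]
  intro hzero
  have hA1 : A = -1 := by
    have hq' : (-q⁻¹ : K) ≠ 0 := by simp [hq0]
    have h0 : A + 1 = 0 := (mul_eq_zero.mp hzero).resolve_left hq'
    linear_combination h0
  have hk : q ^ (2*d+2).natAbs = -1 := by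
    rcases Int.natAbs_eq (2*d+2) with h | h
    · rw [← zpow_natCast, ← h, ← hA, hA1]
    · rw [← zpow_natCast, show ((2*d+2).natAbs : ℤ) = -(2*d+2) from by omega,
        zpow_neg, ← hA, hA1]
      norm_num
  by_cases hk0 : (2*d+2).natAbs = 0
  · rw [hk0, pow_zero] at hk
    norm_num at hk
  · apply hqru (2 * (2*d+2).natAbs) (by omega)
    rw [mul_comm, pow_mul, hk]
    norm_num
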